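/- arXiv:1607.00289 — 2 statements merged into one kernel-verified Lean document; each statement's English description precedes it below -/
import Mathlib

section
/- Let T : H₁ → H₂ be a densely defined closed operator between separable Hilbert spaces with closed range. If the inclusion D(T*∘T) ∩ im(T*∘T) ↪ H₁, with D(T*∘T) ∩ im(T*∘T) endowed with the graph norm of T*∘T, is a compact operator, then the inclusion D(T∘T*) ∩ im(T∘T*) ↪ H₂, with the graph norm of T∘T*, is also a compact operator. -/
namespace Paper

/-- Composition `S ∘ T` of partially defined (unbounded) linear maps, with domain
`{x ∈ dom T | T x ∈ dom S}` and value `S (T x)`. -/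
noncomputable def pcomp {R E F G : Type*} [Ring R] [AddCommGroup E] [Module R E]
    [AddCommGroup F] [Module R F] [AddCommGroup G] [Module R G]
    (S : F →ₗ.[R] G) (T : E →ₗ.[R] F) : E →ₗ.[R] G where
  domain := (S.domain.comap T.toFun).map T.domain.subtype
  toFun :=
    (S.toFun.comp (((T.toFun.comp (S.domain.comap T.toFun).subtype)).codRestrict S.domain
      fun c => c.2)).comp
      (Submodule.equivMapOfInjective T.domain.subtype (Submodule.injective_subtype T.domain)
        (S.domain.comap T.toFun)).symm.toLinearMap
/-- The range (image) of a partially defined linear map. -/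
def pran {R E F : Type*} [Ring R] [AddCommGroup E] [Module R E] [AddCommGroup F] [Module R F]
    (T : E →ₗ.[R] F) : Set F :=
  Set.range fun x : T.domain => T x

/-- The kernel of a partially defined linear map, as a subset of the ambient space. -/
def pker {R E F : Type*} [Ring R] [AddCommGroup E] [Module R E] [AddCommGroup F] [Module R F]
    (T : E →ₗ.[R] F) : Set E :=
  {x | ∃ h : x ∈ T.domain, T ⟨x, h⟩ = 0}

/-- The inclusion `dom S ∩ im S ↪ E`, with `dom S ∩ im S` endowed with the graph norm of `S`,
is a compact operator: the closure of the image of the corresponding graph-norm unit ball is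
compact. -/
def CompactGraphInclusionOn {E : Type*} [NormedAddCommGroup E] [InnerProductSpace ℂ E]
    (S : E →ₗ.[ℂ] E) : Prop :=
  IsCompact (closure ((fun u : S.domain => (u : E)) ''
    {u : S.domain | (u : E) ∈ pran S ∧ ‖(u : E)‖ ^ 2 + ‖S u‖ ^ 2 ≤ 1}))


section AuxStmt2

variable {R E F G : Type*} [Ring R] [AddCommGroup E] [Module R E]
    [AddCommGroup F] [Module R F] [AddCommGroup G] [Module R G]
    (S : F →ₗ.[R] G) (T : E →ₗ.[R] F)

theorem mem_pcomp_domain {x : E} :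
    x ∈ (pcomp S T).domain ↔ ∃ hx : x ∈ T.domain, T ⟨x, hx⟩ ∈ S.domain := by
  constructor
  · rintro ⟨⟨y, hy⟩, hmem, rfl⟩
    exact ⟨hy, hmem⟩
  · rintro ⟨hx, hSx⟩
    exact ⟨⟨x, hx⟩, hSx, rfl⟩

theorem pcomp_apply {x : E} (h1 : x ∈ T.domain) (h2 : T ⟨x, h1⟩ ∈ S.domain)
    (hmem : x ∈ (pcomp S T).domain) :
    (pcomp S T) ⟨x, hmem⟩ = S ⟨T ⟨x, h1⟩, h2⟩ := by
  have he : (Submodule.equivMapOfInjective T.domain.subtype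
      (Submodule.injective_subtype T.domain) (S.domain.comap T.toFun)).symm ⟨x, hmem⟩
      = ⟨⟨x, h1⟩, h2⟩ := by
    rw [LinearEquiv.symm_apply_eq]
    rfl
  show ((S.toFun.comp (((T.toFun.comp (S.domain.comap T.toFun).subtype)).codRestrict S.domain
      fun c => c.2)).comp
      (Submodule.equivMapOfInjective T.domain.subtype (Submodule.injective_subtype T.domain)
        (S.domain.comap T.toFun)).symm.toLinearMap) ⟨x, hmem⟩ = _
  simp only [LinearMap.comp_apply, LinearEquiv.coe_toLinearMap, he]
  rfl


section pcompAux
variable {R E F G : Type*} [Ring R] [AddCommGroup E] [Module R E]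
    [AddCommGroup F] [Module R F] [AddCommGroup G] [Module R G]
    (S : F →ₗ.[R] G) (T : E →ₗ.[R] F)

theorem pcomp_domain_le : (pcomp S T).domain ≤ T.domain := fun _ hx =>
  ((mem_pcomp_domain S T).mp hx).choose

theorem pcomp_mem_right {x : E} (hx : x ∈ (pcomp S T).domain) (h1 : x ∈ T.domain) :
    T ⟨x, h1⟩ ∈ S.domain := by
  obtain ⟨h1', h2⟩ := (mem_pcomp_domain S T).mp hx
  exact h2

theorem smul_mem_pran {c : R} {y : F} (hy : y ∈ pran T) : c • y ∈ pran T := by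
  obtain ⟨x, rfl⟩ := hy
  exact ⟨c • x, T.map_smul c x⟩

end pcompAux

section Hilbert

variable {H₁ H₂ : Type*}
    [NormedAddCommGroup H₁] [InnerProductSpace ℂ H₁] [CompleteSpace H₁]
    [NormedAddCommGroup H₂] [InnerProductSpace ℂ H₂] [CompleteSpace H₂]
    (T : H₁ →ₗ.[ℂ] H₂)

local notation "⟪" x ", " y "⟫" => @inner ℂ _ _ x y

theorem key1 (hdense : Dense (T.domain : Set H₁)) (a : (pcomp T.adjoint T).domain)
    (h1 : (a : H₁) ∈ T.domain) :
    ((‖T ⟨a, h1⟩‖ : ℂ))^2 = ⟪(pcomp T.adjoint T) a, (a : H₁)⟫ := by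
  have h2 : T ⟨(a : H₁), h1⟩ ∈ T.adjoint.domain := pcomp_mem_right _ _ a.2 h1
  rw [pcomp_apply _ _ h1 h2]
  have h := LinearPMap.adjoint_isFormalAdjoint hdense ⟨T ⟨(a : H₁), h1⟩, h2⟩ ⟨(a : H₁), h1⟩
  rw [h]
  exact (inner_self_eq_norm_sq_to_K (𝕜 := ℂ) (E := H₂) (T ⟨(a : H₁), h1⟩)).symm

theorem key2 (hdense : Dense (T.domain : Set H₁)) (a : (pcomp T T.adjoint).domain)
    (h1 : (a : H₂) ∈ T.adjoint.domain) :
    ((‖T.adjoint ⟨a, h1⟩‖ : ℂ))^2 = ⟪(a : H₂), (pcomp T T.adjoint) a⟫ := by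
  have h2 : T.adjoint ⟨(a : H₂), h1⟩ ∈ T.domain := pcomp_mem_right _ _ a.2 h1
  rw [pcomp_apply _ _ h1 h2]
  have h := LinearPMap.adjoint_isFormalAdjoint hdense ⟨(a : H₂), h1⟩ ⟨T.adjoint ⟨(a : H₂), h1⟩, h2⟩
  rw [← h]
  exact (inner_self_eq_norm_sq_to_K (𝕜 := ℂ) (E := H₁) (T.adjoint ⟨(a : H₂), h1⟩)).symm

theorem est1 (hdense : Dense (T.domain : Set H₁)) (a : (pcomp T.adjoint T).domain)
    (h1 : (a : H₁) ∈ T.domain) :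
    ‖T ⟨a, h1⟩‖^2 ≤ ‖(pcomp T.adjoint T) a‖ * ‖(a : H₁)‖ := by
  have h := key1 T hdense a h1
  calc ‖T ⟨(a : H₁), h1⟩‖^2 = ‖((‖T ⟨(a : H₁), h1⟩‖ : ℂ))^2‖ := by
        rw [norm_pow, Complex.norm_real, norm_norm]
    _ = ‖⟪(pcomp T.adjoint T) a, (a : H₁)⟫‖ := by rw [h]
    _ ≤ ‖(pcomp T.adjoint T) a‖ * ‖(a : H₁)‖ := norm_inner_le_norm _ _

theorem est2 (hdense : Dense (T.domain : Set H₁)) (a : (pcomp T T.adjoint).domain)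
    (h1 : (a : H₂) ∈ T.adjoint.domain) :
    ‖T.adjoint ⟨a, h1⟩‖^2 ≤ ‖(a : H₂)‖ * ‖(pcomp T T.adjoint) a‖ := by
  have h := key2 T hdense a h1
  calc ‖T.adjoint ⟨(a : H₂), h1⟩‖^2 = ‖((‖T.adjoint ⟨(a : H₂), h1⟩‖ : ℂ))^2‖ := by
        rw [norm_pow, Complex.norm_real, norm_norm]
    _ = ‖⟪(a : H₂), (pcomp T T.adjoint) a⟫‖ := by rw [h]
    _ ≤ ‖(a : H₂)‖ * ‖(pcomp T T.adjoint) a‖ := norm_inner_le_norm _ _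


set_option linter.unusedSectionVars false

theorem pran_adjoint_subset (hdense : Dense (T.domain : Set H₁)) (hran : IsClosed (pran T)) :
    pran T.adjoint ⊆ pran (pcomp T.adjoint T) := by
  intro w hw
  obtain ⟨y, rfl⟩ := hw
  set M : Submodule ℂ H₂ := LinearMap.range T.toFun with hMdef
  have hM : IsClosed (M : Set H₂) := by
    have : (M : Set H₂) = pran T := LinearMap.coe_range _
    rw [this]; exact hran
  haveI : CompleteSpace M := hM.completeSpace_coe
  set p : H₂ := (M.orthogonalProjectionOnto (y : H₂) : H₂) with hpdef
  have hpM : p ∈ M := (M.orthogonalProjectionOnto (y : H₂)).2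
  set z : H₂ := (y : H₂) - p with hzdef
  have hzperp : z ∈ Mᗮ := Submodule.sub_starProjection_mem_orthogonal (K := M) (y : H₂)
  have hinner0 : ∀ x : T.domain, (0 : ℂ) = ⟪z, T x⟫ := by
    intro x
    have : T x ∈ M := LinearMap.mem_range.mpr ⟨x, rfl⟩
    exact ((Submodule.mem_orthogonal' M z).mp hzperp (T x) this).symm
  have hzdom : z ∈ T.adjoint.domain :=
    LinearPMap.mem_adjoint_domain_of_exists z ⟨0, fun x => by
      rw [inner_zero_left]; exact hinner0 x⟩
  have hzval : T.adjoint ⟨z, hzdom⟩ = 0 :=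
    LinearPMap.adjoint_apply_eq hdense ⟨z, hzdom⟩ (fun x => by
      rw [inner_zero_left]; exact hinner0 x)
  have hpdom : p ∈ T.adjoint.domain := by
    have : p = (y : H₂) - z := (sub_sub_cancel _ _).symm
    rw [this]; exact sub_mem y.2 hzdom
  obtain ⟨x, hx⟩ := LinearMap.mem_range.mp hpM
  have h2 : T x ∈ T.adjoint.domain := by
    show T.toFun x ∈ _
    rw [hx]; exact hpdom
  have hmem : (x : H₁) ∈ (pcomp T.adjoint T).domain :=
    (mem_pcomp_domain _ _).mpr ⟨x.2, h2⟩
  refine ⟨⟨(x : H₁), hmem⟩, ?_⟩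
  show (pcomp T.adjoint T) ⟨(x : H₁), hmem⟩ = T.adjoint y
  rw [pcomp_apply _ _ x.2 h2]
  have hysplit : y = (⟨p, hpdom⟩ : T.adjoint.domain) + ⟨z, hzdom⟩ := by
    apply Subtype.ext
    show (y : H₂) = p + z
    exact (add_sub_cancel _ _).symm
  have hTx : (⟨T ⟨(x : H₁), x.2⟩, h2⟩ : T.adjoint.domain) = ⟨p, hpdom⟩ := by
    apply Subtype.ext
    show T.toFun x = p
    exact hx
  rw [hTx, hysplit, T.adjoint.map_add, hzval, add_zero]



/-- `T` restricted to the domain of `T†∘T`, as a linear map. -/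
noncomputable def tau : (pcomp T.adjoint T).domain →ₗ[ℂ] H₂ :=
  T.toFun.comp (Submodule.inclusion (pcomp_domain_le T.adjoint T))

theorem tau_apply (a : (pcomp T.adjoint T).domain) (h1 : (a : H₁) ∈ T.domain) :
    tau T a = T ⟨(a : H₁), h1⟩ := rfl

theorem est1' (hdense : Dense (T.domain : Set H₁)) (a : (pcomp T.adjoint T).domain) :
    ‖tau T a‖^2 ≤ ‖(pcomp T.adjoint T) a‖ * ‖(a : H₁)‖ := by
  rw [tau_apply T a (pcomp_domain_le T.adjoint T a.2)]
  exact est1 T hdense a _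

theorem exists_bound (hdense : Dense (T.domain : Set H₁)) (hclosed : T.IsClosed)
    (hcpt : CompactGraphInclusionOn (pcomp T.adjoint T)) :
    ∃ C : ℝ, 0 < C ∧ ∀ a : (pcomp T.adjoint T).domain,
      (a : H₁) ∈ pran (pcomp T.adjoint T) → ‖(a : H₁)‖ ≤ C * ‖(pcomp T.adjoint T) a‖ := by
  set S₁ := pcomp T.adjoint T with hS₁
  by_contra hcon
  push_neg at hcon
  have h := hcon
  have hseq : ∀ n : ℕ, ∃ a : S₁.domain, (a : H₁) ∈ pran S₁ ∧ ‖(a : H₁)‖ = 1 ∧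
      ‖S₁ a‖ < 1/(n+1) := by
    intro n
    obtain ⟨a, hmem, hlt⟩ := h (n+1) (by positivity)
    have hapos : 0 < ‖(a : H₁)‖ := lt_of_le_of_lt (by positivity) hlt
    refine ⟨(((‖(a : H₁)‖⁻¹ : ℝ) : ℂ)) • a, ?_, ?_, ?_⟩
    · exact smul_mem_pran _ hmem
    · push_cast []
      rw [norm_smul, norm_inv, Complex.norm_real, Real.norm_eq_abs, abs_norm,
        inv_mul_cancel₀ (ne_of_gt hapos)]
    · rw [S₁.map_smul, norm_smul]
      simp only [Complex.norm_real, Real.norm_eq_abs, abs_of_pos (inv_pos.mpr hapos)]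
      rw [inv_mul_lt_iff₀ hapos, mul_one_div, lt_div_iff₀ (by positivity : (0:ℝ) < (n:ℝ)+1)]
      nlinarith [hlt]
  choose w hw using hseq
  set c : ℂ := (((Real.sqrt 2)⁻¹ : ℝ) : ℂ) with hc
  set z : ℕ → S₁.domain := fun n => c • w n with hz
  have hzmem : ∀ n, (z n : H₁) ∈ ((fun u : S₁.domain => (u : H₁)) ''
      {u : S₁.domain | (u : H₁) ∈ pran S₁ ∧ ‖(u : H₁)‖ ^ 2 + ‖S₁ u‖ ^ 2 ≤ 1}) := by
    intro n
    refine ⟨z n, ⟨smul_mem_pran _ (hw n).1, ?_⟩, rfl⟩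
    have h2 : (0:ℝ) < Real.sqrt 2 := Real.sqrt_pos.mpr (by norm_num)
    have hns : ‖c‖ = (Real.sqrt 2)⁻¹ := by
      rw [hc, Complex.norm_real, Real.norm_eq_abs, abs_of_pos (inv_pos.mpr h2)]
    have h1 : ‖(z n : H₁)‖ = (Real.sqrt 2)⁻¹ := by
      rw [hz]
      simp only [Submodule.coe_smul, norm_smul, hns, (hw n).2.1, mul_one]
    have h2' : ‖S₁ (z n)‖ ≤ (Real.sqrt 2)⁻¹ := by
      rw [hz]
      simp only [S₁.map_smul, norm_smul, hns]
      have := (hw n).2.2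
      have h3 : ‖S₁ (w n)‖ ≤ 1 := le_of_lt (lt_of_lt_of_le this (by
        rw [div_le_one (by positivity)]; linarith [Nat.cast_nonneg (α := ℝ) n]))
      calc (Real.sqrt 2)⁻¹ * ‖S₁ (w n)‖ ≤ (Real.sqrt 2)⁻¹ * 1 := by
            exact mul_le_mul_of_nonneg_left h3 (by positivity)
        _ = (Real.sqrt 2)⁻¹ := mul_one _
    have hsq : ((Real.sqrt 2)⁻¹)^2 = 1/2 := by
      rw [inv_pow, Real.sq_sqrt (by norm_num : (0:ℝ) ≤ 2)]
      norm_num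
    calc ‖(z n : H₁)‖^2 + ‖S₁ (z n)‖^2 ≤ ((Real.sqrt 2)⁻¹)^2 + ((Real.sqrt 2)⁻¹)^2 :=
          add_le_add (by rw [h1]) (pow_le_pow_left₀ (norm_nonneg _) h2' 2)
      _ = 1 := by rw [hsq]; norm_num
  have hseqcpt := hcpt.isSeqCompact
  obtain ⟨zlim, _, φ, hφ, hconv⟩ := hseqcpt (x := fun n => (z n : H₁))
    (fun n => subset_closure (hzmem n))
  set wlim : H₁ := ((Real.sqrt 2 : ℝ) : ℂ) • zlim with hwlim
  have hs2pos : (0:ℝ) < Real.sqrt 2 := Real.sqrt_pos.mpr (by norm_num)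
  have hs2 : ((Real.sqrt 2 : ℝ) : ℂ) * c = 1 := by
    rw [hc]
    rw [← Complex.ofReal_mul, mul_inv_cancel₀ (ne_of_gt hs2pos), Complex.ofReal_one]
  have hwz : ∀ n, ((w n : H₁)) = ((Real.sqrt 2 : ℝ) : ℂ) • (z n : H₁) := by
    intro n
    rw [hz]
    simp only [Submodule.coe_smul, smul_smul, hs2, one_smul]
  have hconvw : Filter.Tendsto (fun n => ((w (φ n) : H₁))) Filter.atTop (nhds wlim) := by
    simp only [hwz]
    exact hconv.const_smul _
  have hnorm1 : ‖wlim‖ = 1 := by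
    have h1 := hconvw.norm
    have h2 : (fun n => ‖((w (φ n)) : H₁)‖) = fun _ => (1:ℝ) := funext fun n => (hw (φ n)).2.1
    rw [h2] at h1
    exact tendsto_nhds_unique h1 tendsto_const_nhds
  have hS1w : ∀ n, ‖S₁ (w (φ n))‖ ≤ 1/((n:ℝ)+1) := by
    intro n
    refine le_trans (le_of_lt (hw (φ n)).2.2) ?_
    have hφn : (n:ℝ) ≤ (φ n : ℝ) := Nat.cast_le.mpr hφ.le_apply
    exact one_div_le_one_div_of_le (by positivity) (by linarith)
  set u : ℕ → H₂ := fun n => tau T (w (φ n)) with hu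
  have hdistsq : ∀ N m n : ℕ, N ≤ m → N ≤ n → dist (u m) (u n) ^ 2 ≤ 4/((N:ℝ)+1) := by
    intro N m n hm hn
    rw [dist_eq_norm, hu]
    have hsub : tau T (w (φ m)) - tau T (w (φ n)) = tau T (w (φ m) - w (φ n)) :=
      (map_sub _ _ _).symm
    rw [hsub]
    have e1 := est1' T hdense (w (φ m) - w (φ n))
    have e2 : ‖S₁ (w (φ m) - w (φ n))‖ ≤ 2/((N:ℝ)+1) := by
      rw [S₁.map_sub]
      refine le_trans (norm_sub_le _ _) ?_
      have hmN : 1/((m:ℝ)+1) ≤ 1/((N:ℝ)+1) :=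
        one_div_le_one_div_of_le (by positivity) (by exact_mod_cast by linarith [hm])
      have hnN : 1/((n:ℝ)+1) ≤ 1/((N:ℝ)+1) :=
        one_div_le_one_div_of_le (by positivity) (by exact_mod_cast by linarith [hn])
      calc ‖S₁ (w (φ m))‖ + ‖S₁ (w (φ n))‖ ≤ 1/((m:ℝ)+1) + 1/((n:ℝ)+1) :=
            add_le_add (hS1w m) (hS1w n)
        _ ≤ 1/((N:ℝ)+1) + 1/((N:ℝ)+1) := add_le_add hmN hnN
        _ = 2/((N:ℝ)+1) := by ring
    have e3 : ‖((w (φ m) - w (φ n) : S₁.domain) : H₁)‖ ≤ 2 := by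
      rw [Submodule.coe_sub]
      refine le_trans (norm_sub_le _ _) ?_
      rw [(hw (φ m)).2.1, (hw (φ n)).2.1]
      norm_num
    calc ‖tau T (w (φ m) - w (φ n))‖^2
        ≤ ‖S₁ (w (φ m) - w (φ n))‖ * ‖((w (φ m) - w (φ n) : S₁.domain) : H₁)‖ := e1
      _ ≤ (2/((N:ℝ)+1)) * 2 := mul_le_mul e2 e3 (norm_nonneg _) (by positivity)
      _ = 4/((N:ℝ)+1) := by ring
  have hcauchy : CauchySeq u := by
    rw [Metric.cauchySeq_iff]
    intro ε hε
    obtain ⟨N, hN⟩ := exists_nat_gt (4/ε^2)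
    refine ⟨N, fun m hm n hn => ?_⟩
    have h1 : dist (u m) (u n) ^ 2 ≤ 4/((N:ℝ)+1) := hdistsq N m n hm hn
    have h2 : 4/((N:ℝ)+1) < ε^2 := by
      rw [div_lt_iff₀ (by positivity)]
      rw [div_lt_iff₀ (by positivity)] at hN
      nlinarith [hN]
    have h3 : dist (u m) (u n) ^ 2 < ε ^ 2 := lt_of_le_of_lt h1 h2
    exact lt_of_pow_lt_pow_left₀ 2 (le_of_lt hε) h3
  obtain ⟨t, ht⟩ := cauchySeq_tendsto_of_complete hcauchy
  have hgraph : ∀ n, (((w (φ n)) : H₁), u n) ∈ T.graph := by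
    intro n
    show (((w (φ n)) : H₁), tau T (w (φ n))) ∈ T.graph
    rw [tau_apply T _ (pcomp_domain_le T.adjoint T (w (φ n)).2)]
    exact T.mem_graph ⟨((w (φ n)) : H₁), pcomp_domain_le T.adjoint T (w (φ n)).2⟩
  have hlim_graph : (wlim, t) ∈ T.graph := by
    have hcl : _root_.IsClosed (T.graph : Set (H₁ × H₂)) := hclosed
    exact hcl.mem_of_tendsto (hconvw.prodMk_nhds ht) (Filter.Eventually.of_forall hgraph)
  obtain ⟨xu, hxu1, hxu2⟩ := T.mem_graph_iff.mp hlim_graph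
  have ht0 : t = 0 := by
    have hnormu : ∀ n, ‖u n‖ ≤ Real.sqrt (1/((n:ℝ)+1)) := by
      intro n
      have h1 : ‖u n‖^2 ≤ ‖S₁ (w (φ n))‖ * ‖((w (φ n)) : H₁)‖ := est1' T hdense _
      rw [(hw (φ n)).2.1, mul_one] at h1
      have h2 : ‖u n‖^2 ≤ 1/((n:ℝ)+1) := le_trans h1 (hS1w n)
      have h3 := Real.sqrt_le_sqrt h2
      rwa [Real.sqrt_sq (norm_nonneg _)] at h3
    have hzero : Filter.Tendsto u Filter.atTop (nhds 0) := by
      rw [tendsto_zero_iff_norm_tendsto_zero]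
      refine squeeze_zero (fun n => norm_nonneg _) hnormu ?_
      have hb := tendsto_one_div_add_atTop_nhds_zero_nat (𝕜 := ℝ)
      have hsqrt : Filter.Tendsto Real.sqrt (nhds 0) (nhds 0) := by
        have := Real.continuous_sqrt.tendsto 0
        rwa [Real.sqrt_zero] at this
      exact hsqrt.comp hb
    exact tendsto_nhds_unique ht hzero
  have hinner : ∀ n, ⟪(((w (φ n))) : H₁), wlim⟫ = 0 := by
    intro n
    obtain ⟨b, hb⟩ := (hw (φ n)).1
    have hb' : S₁ b = ((w (φ n)) : H₁) := hb
    have h1b : (b : H₁) ∈ T.domain := pcomp_domain_le T.adjoint T b.2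
    have h2b : T ⟨(b : H₁), h1b⟩ ∈ T.adjoint.domain := pcomp_mem_right T.adjoint T b.2 h1b
    have hbeq : S₁ b = T.adjoint ⟨T ⟨(b : H₁), h1b⟩, h2b⟩ := pcomp_apply _ _ h1b h2b b.2
    have hxu1' : (xu : H₁) = wlim := hxu1
    have hxu2' : T xu = t := hxu2
    rw [← hb', hbeq, ← hxu1']
    rw [LinearPMap.adjoint_isFormalAdjoint hdense ⟨T ⟨(b : H₁), h1b⟩, h2b⟩ xu]
    rw [hxu2', ht0]
    exact inner_zero_right _
  have hfinal : ⟪wlim, wlim⟫ = 0 := by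
    have h1 : Filter.Tendsto (fun n => ⟪(((w (φ n))) : H₁), wlim⟫) Filter.atTop
        (nhds ⟪wlim, wlim⟫) := hconvw.inner tendsto_const_nhds
    have h2 : (fun n => ⟪(((w (φ n))) : H₁), wlim⟫) = fun _ => (0:ℂ) := funext hinner
    rw [h2] at h1
    exact tendsto_nhds_unique h1 tendsto_const_nhds
  have hwlim0 : wlim = 0 := inner_self_eq_zero.mp hfinal
  rw [hwlim0, norm_zero] at hnorm1
  exact one_ne_zero hnorm1.symm


theorem stmt2' (hdense : Dense (T.domain : Set H₁)) (hclosed : T.IsClosed)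
    (hran : IsClosed (pran T))
    (hcpt : CompactGraphInclusionOn (pcomp T.adjoint T)) :
    CompactGraphInclusionOn (pcomp T T.adjoint) := by
  classical
  set S₁ := pcomp T.adjoint T with hS₁def
  set S₂ := pcomp T T.adjoint with hS₂def
  obtain ⟨C, hC, hbound⟩ := exists_bound T hdense hclosed hcpt
  -- the choice of preimages
  have hchoice : ∀ u : S₂.domain, ((u : H₂) ∈ pran S₂ ∧ ‖(u : H₂)‖^2 + ‖S₂ u‖^2 ≤ 1) →
      ∃ v : S₁.domain, (v : H₁) ∈ pran S₁ ∧ ‖(v : H₁)‖ ≤ C ∧ ‖S₁ v‖ ≤ 1 ∧ tau T v = (u : H₂) := by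
    rintro u ⟨humem, hubnd⟩
    obtain ⟨b, hb⟩ := humem
    have hb' : S₂ b = (u : H₂) := hb
    have h1b : (b : H₂) ∈ T.adjoint.domain := pcomp_domain_le T T.adjoint b.2
    have h2b : T.adjoint ⟨(b : H₂), h1b⟩ ∈ T.domain := pcomp_mem_right T T.adjoint b.2 h1b
    set vv : H₁ := T.adjoint ⟨(b : H₂), h1b⟩ with hvv
    have hbval : S₂ b = T ⟨vv, h2b⟩ := pcomp_apply T T.adjoint h1b h2b b.2
    have hudom : (u : H₂) ∈ T.adjoint.domain := pcomp_domain_le T T.adjoint u.2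
    have hTvv : T ⟨vv, h2b⟩ = (u : H₂) := by rw [← hbval]; exact hb'
    have hvmem : vv ∈ S₁.domain := (mem_pcomp_domain T.adjoint T).mpr
      ⟨h2b, by rw [hTvv]; exact hudom⟩
    set v : S₁.domain := ⟨vv, hvmem⟩ with hv
    have hvpran : vv ∈ pran S₁ :=
      pran_adjoint_subset T hdense hran ⟨⟨(b : H₂), h1b⟩, rfl⟩
    have h2v : T ⟨vv, h2b⟩ ∈ T.adjoint.domain := by rw [hTvv]; exact hudom
    have hS1v : S₁ v = T.adjoint ⟨(u : H₂), hudom⟩ := by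
      have := pcomp_apply T.adjoint T h2b h2v hvmem
      rw [hv, this]
      congr 1
      exact Subtype.ext hTvv
    have hnormS1v : ‖S₁ v‖ ≤ 1 := by
      rw [hS1v]
      have e := est2 T hdense u hudom
      nlinarith [norm_nonneg (T.adjoint ⟨(u : H₂), hudom⟩), norm_nonneg ((u : H₂)),
        norm_nonneg (S₂ u), sq_nonneg (‖(u : H₂)‖ - ‖S₂ u‖)]
    have hnormv : ‖vv‖ ≤ C := by
      calc ‖vv‖ ≤ C * ‖S₁ v‖ := hbound v hvpran
        _ ≤ C * 1 := mul_le_mul_of_nonneg_left hnormS1v (le_of_lt hC)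
        _ = C := mul_one C
    exact ⟨v, hvpran, hnormv, hnormS1v, by rw [tau_apply T v h2b]; exact hTvv⟩
  choose vmap hv1 hv2 hv3 hv4 using hchoice
  set P : Set S₂.domain := {u : S₂.domain | (u : H₂) ∈ pran S₂ ∧ ‖(u : H₂)‖^2 + ‖S₂ u‖^2 ≤ 1}
    with hP
  set A₀ : Set H₁ := {x : H₁ | ∃ (u : S₂.domain) (hu : u ∈ P), ((vmap u hu : S₁.domain) : H₁) = x}
    with hA₀
  -- A₀ is totally bounded
  set r : ℝ := Real.sqrt (C^2 + 1) with hr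
  have hrpos : 0 < r := Real.sqrt_pos.mpr (by positivity)
  have hrsq : r^2 = C^2 + 1 := Real.sq_sqrt (by positivity)
  have hA₀sub : A₀ ⊆ (fun y : H₁ => ((r:ℝ):ℂ) • y) '' closure ((fun u : S₁.domain => (u : H₁)) ''
      {u : S₁.domain | (u : H₁) ∈ pran S₁ ∧ ‖(u : H₁)‖ ^ 2 + ‖S₁ u‖ ^ 2 ≤ 1}) := by
    rintro x ⟨u, hu, rfl⟩
    set x' : S₁.domain := (((r⁻¹ : ℝ) : ℂ)) • vmap u hu with hx'
    have hx'mem : (x' : H₁) ∈ pran S₁ ∧ ‖(x' : H₁)‖ ^ 2 + ‖S₁ x'‖ ^ 2 ≤ 1 := by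
      constructor
      · exact smul_mem_pran _ (hv1 u hu)
      · have hn1 : ‖(x' : H₁)‖ = r⁻¹ * ‖((vmap u hu : S₁.domain) : H₁)‖ := by
          rw [hx']
          rw [Submodule.coe_smul, norm_smul, Complex.norm_real, Real.norm_eq_abs,
            abs_of_pos (inv_pos.mpr hrpos)]
        have hn2 : ‖S₁ x'‖ = r⁻¹ * ‖S₁ (vmap u hu)‖ := by
          rw [hx', S₁.map_smul, norm_smul, Complex.norm_real, Real.norm_eq_abs,
            abs_of_pos (inv_pos.mpr hrpos)]
        rw [hn1, hn2, mul_pow, mul_pow, ← mul_add]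
        have hb1 : ‖((vmap u hu : S₁.domain) : H₁)‖^2 ≤ C^2 :=
          pow_le_pow_left₀ (norm_nonneg _) (hv2 u hu) 2
        have hb2 : ‖S₁ (vmap u hu)‖^2 ≤ 1 := by
          have := pow_le_pow_left₀ (norm_nonneg _) (hv3 u hu) 2
          simpa using this
        calc (r⁻¹)^2 * (‖((vmap u hu : S₁.domain) : H₁)‖^2 + ‖S₁ (vmap u hu)‖^2)
            ≤ (r⁻¹)^2 * (C^2 + 1) := by
              apply mul_le_mul_of_nonneg_left (add_le_add hb1 hb2) (by positivity)
          _ = 1 := by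
              rw [inv_pow, hrsq]
              field_simp
    refine ⟨(x' : H₁), subset_closure ⟨x', hx'mem, rfl⟩, ?_⟩
    show ((r:ℝ):ℂ) • ((x' : S₁.domain) : H₁) = ((vmap u hu : S₁.domain) : H₁)
    rw [hx', Submodule.coe_smul, smul_smul, ← Complex.ofReal_mul,
      mul_inv_cancel₀ (ne_of_gt hrpos), Complex.ofReal_one, one_smul]
  have hA₀tb : TotallyBounded A₀ :=
    ((hcpt.image (continuous_const_smul (((r:ℝ):ℂ)))).totallyBounded).subset hA₀sub
  -- now conclude
  show IsCompact (closure ((fun u : S₂.domain => (u : H₂)) '' P))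
  have htb : TotallyBounded ((fun u : S₂.domain => (u : H₂)) '' P) := by
    rw [Metric.totallyBounded_iff]
    intro ε hε
    set δ : ℝ := ε^2/4 with hδ
    have hδpos : 0 < δ := by positivity
    obtain ⟨s, hs_sub, hs_fin, hs_cover⟩ := totallyBounded_iff_subset.mp hA₀tb
      {p : H₁ × H₁ | dist p.1 p.2 < δ} (Metric.dist_mem_uniformity hδpos)
    set g : H₁ → H₂ := fun y => if h : y ∈ A₀ then ((h.choose : S₂.domain) : H₂) else 0 with hg
    refine ⟨g '' s, hs_fin.image g, ?_⟩
    rintro x ⟨u, hu, rfl⟩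
    have hvA₀ : ((vmap u hu : S₁.domain) : H₁) ∈ A₀ := ⟨u, hu, rfl⟩
    obtain ⟨y, hy_mem, hy_close⟩ := Set.mem_iUnion₂.mp (hs_cover hvA₀)
    have hyA₀ : y ∈ A₀ := hs_sub hy_mem
    set u' : S₂.domain := hyA₀.choose with hu'def
    have hu'spec : ∃ hu' : u' ∈ P, ((vmap u' hu' : S₁.domain) : H₁) = y := hyA₀.choose_spec
    obtain ⟨hu'P, hu'eq⟩ := hu'spec
    have hgy : g y = (u' : H₂) := by rw [hg]; simp only [dif_pos hyA₀]; rfl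
    refine Set.mem_iUnion₂.mpr ⟨g y, Set.mem_image_of_mem g hy_mem, ?_⟩
    rw [Metric.mem_ball, hgy]
    -- dist estimate
    have htau : (u : H₂) - (u' : H₂) = tau T (vmap u hu - vmap u' hu'P) := by
      rw [map_sub, hv4 u hu, hv4 u' hu'P]
    have hd1 : dist ((u : H₂)) ((u' : H₂)) ^ 2 ≤ 2 * δ := by
      rw [dist_eq_norm, htau]
      have e1 := est1' T hdense (vmap u hu - vmap u' hu'P)
      have e2 : ‖S₁ (vmap u hu - vmap u' hu'P)‖ ≤ 2 := by
        rw [S₁.map_sub]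
        refine le_trans (norm_sub_le _ _) ?_
        linarith [hv3 u hu, hv3 u' hu'P]
      have e3 : ‖((vmap u hu - vmap u' hu'P : S₁.domain) : H₁)‖ ≤ δ := by
        rw [Submodule.coe_sub]
        have : dist ((vmap u hu : S₁.domain) : H₁) y < δ := hy_close
        rw [← hu'eq] at this
        rw [dist_eq_norm] at this
        exact le_of_lt this
      calc ‖tau T (vmap u hu - vmap u' hu'P)‖^2
          ≤ ‖S₁ (vmap u hu - vmap u' hu'P)‖ * ‖((vmap u hu - vmap u' hu'P : S₁.domain) : H₁)‖ :=
            e1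
        _ ≤ 2 * δ := mul_le_mul e2 e3 (norm_nonneg _) (by norm_num)
    have hd2 : dist ((u : H₂)) ((u' : H₂)) ^ 2 < ε ^ 2 := by
      refine lt_of_le_of_lt hd1 ?_
      rw [hδ]
      nlinarith [hε]
    exact lt_of_pow_lt_pow_left₀ 2 (le_of_lt hε) hd2
  exact TotallyBounded.isCompact_of_isClosed htb.closure isClosed_closure


end Hilbert

end AuxStmt2

/-- Let `T : H₁ → H₂` be a densely defined closed operator between separable
Hilbert spaces with closed range.  If the inclusion `dom (T†∘T) ∩ im (T†∘T) ↪ H₁` (graph norm)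
is compact, then so is the inclusion `dom (T∘T†) ∩ im (T∘T†) ↪ H₂` (graph norm). -/
theorem stmt2 {H₁ H₂ : Type*}
    [NormedAddCommGroup H₁] [InnerProductSpace ℂ H₁] [CompleteSpace H₁]
    [TopologicalSpace.SeparableSpace H₁]
    [NormedAddCommGroup H₂] [InnerProductSpace ℂ H₂] [CompleteSpace H₂]
    [TopologicalSpace.SeparableSpace H₂]
    (T : H₁ →ₗ.[ℂ] H₂) (hdense : Dense (T.domain : Set H₁)) (hclosed : T.IsClosed)
    (hran : IsClosed (pran T))
    (hcpt : CompactGraphInclusionOn (pcomp T.adjoint T)) :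
    CompactGraphInclusionOn (pcomp T T.adjoint) :=
  stmt2' T hdense hclosed hran hcpt

end Paper
end

section
/- Let T : H₁ → H₂ be a closed densely defined operator and A = T*∘T. If the inclusion (D(T), graph norm of T) ↪ H₁ is a compact operator, then A is self-adjoint with discrete spectrum; equivalently the inclusion (D(A), graph norm of A) ↪ H₁ is a compact operator. -/
namespace Paper

/-- A (self-adjoint) operator has discrete spectrum (its spectrum consists of isolated
eigenvalues of finite multiplicity) if and only if the inclusion of its domain, endowed with
the graph norm, into the ambient Hilbert space is a compact operator; we take this compactness
property as the definition. -/
def HasDiscreteSpectrum {E F : Type*} [NormedAddCommGroup E] [InnerProductSpace ℂ E]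
    [NormedAddCommGroup F] [InnerProductSpace ℂ F] (T : E →ₗ.[ℂ] F) : Prop :=
  IsCompact (closure ((fun u : T.domain => (u : E)) ''
    {u : T.domain | ‖(u : E)‖ ^ 2 + ‖T u‖ ^ 2 ≤ 1}))

section Aux

open scoped InnerProductSpace ComplexConjugate

theorem mem_pcomp_iff {R E F G : Type*} [Ring R] [AddCommGroup E] [Module R E]
    [AddCommGroup F] [Module R F] [AddCommGroup G] [Module R G]
    (S : F →ₗ.[R] G) (T : E →ₗ.[R] F) {x : E} :
    x ∈ (pcomp S T).domain ↔ ∃ hx : x ∈ T.domain, T ⟨x, hx⟩ ∈ S.domain := by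
  simp only [pcomp, Submodule.mem_map, Submodule.mem_comap, Submodule.coe_subtype]
  constructor
  · rintro ⟨⟨y, hy⟩, hmem, rfl⟩
    exact ⟨hy, hmem⟩
  · rintro ⟨hx, hmem⟩
    exact ⟨⟨x, hx⟩, hmem, rfl⟩

theorem pcomp_apply_s15 {R E F G : Type*} [Ring R] [AddCommGroup E] [Module R E]
    [AddCommGroup F] [Module R F] [AddCommGroup G] [Module R G]
    (S : F →ₗ.[R] G) (T : E →ₗ.[R] F) (u : (pcomp S T).domain) (hx : (u : E) ∈ T.domain)
    (hTx : T ⟨(u : E), hx⟩ ∈ S.domain) :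
    pcomp S T u = S ⟨T ⟨(u : E), hx⟩, hTx⟩ := by
  set e := (Submodule.equivMapOfInjective T.domain.subtype
    (Submodule.injective_subtype T.domain) (S.domain.comap T.toFun))
  set w := e.symm u with hw
  have h1 : ((w : T.domain) : E) = (u : E) := by
    have : (↑(e w) : E) = T.domain.subtype (w : T.domain) := rfl
    rw [hw] at this ⊢
    exact this.symm.trans (congrArg Subtype.val (e.apply_symm_apply u))
  have h2 : (w : T.domain) = ⟨(u : E), hx⟩ := Subtype.ext h1
  show S.toFun ⟨T.toFun (w : T.domain), w.2⟩ = S.toFun ⟨T ⟨(u : E), hx⟩, hTx⟩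
  refine congrArg _ (Subtype.ext ?_)
  show T.toFun (w : T.domain) = T.toFun ⟨(u : E), hx⟩
  rw [h2]

variable {H₁ H₂ : Type*}
    [NormedAddCommGroup H₁] [InnerProductSpace ℂ H₁] [CompleteSpace H₁]
    [NormedAddCommGroup H₂] [InnerProductSpace ℂ H₂] [CompleteSpace H₂]

theorem key_surj (T : H₁ →ₗ.[ℂ] H₂) (hdense : Dense (T.domain : Set H₁))
    (hclosed : T.IsClosed) (y : H₁) :
    ∃ (s : T.domain) (hTs : T s ∈ T.adjoint.domain),
      T.adjoint ⟨T s, hTs⟩ = y - s := by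
  classical
  set K : Submodule ℂ (WithLp 2 (H₁ × H₂)) :=
    T.graph.comap (WithLp.linearEquiv 2 ℂ (H₁ × H₂)).toLinearMap with hK
  have hKmem : ∀ z : WithLp 2 (H₁ × H₂), z ∈ K ↔ (WithLp.equiv 2 (H₁ × H₂) z) ∈ T.graph := by
    intro z; rfl
  have hKclosed : IsClosed (K : Set (WithLp 2 (H₁ × H₂))) := by
    have : (K : Set (WithLp 2 (H₁ × H₂))) =
        (WithLp.prodContinuousLinearEquiv 2 ℂ H₁ H₂) ⁻¹' (T.graph : Set (H₁ × H₂)) := rfl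
    rw [this]
    exact hclosed.preimage (WithLp.prodContinuousLinearEquiv 2 ℂ H₁ H₂).continuous
  haveI : CompleteSpace K := hKclosed.completeSpace_coe
  set φ : K →L[ℂ] ℂ := (innerSL ℂ y).comp ((ContinuousLinearMap.fst ℂ H₁ H₂).comp
    (((WithLp.prodContinuousLinearEquiv 2 ℂ H₁ H₂).toContinuousLinearMap).comp K.subtypeL))
    with hφ
  set s' : K := (InnerProductSpace.toDual ℂ K).symm φ with hs'
  have hriesz : ∀ k : K, ⟪s', k⟫_ℂ = φ k := fun k => InnerProductSpace.toDual_symm_apply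
  obtain ⟨d, hd1, hd2⟩ := T.mem_graph_iff.mp ((hKmem _).mp s'.2)
  have hmain : ∀ t : T.domain, ⟪(d : H₁), (t : H₁)⟫_ℂ + ⟪T d, T t⟫_ℂ = ⟪y, (t : H₁)⟫_ℂ := by
    intro t
    set k : K := ⟨(WithLp.equiv 2 (H₁ × H₂)).symm ((t : H₁), T t), by
      rw [hKmem]; simpa using T.mem_graph t⟩ with hk
    have h1 := hriesz k
    have h2 : ⟪s', k⟫_ℂ = ⟪((s' : WithLp 2 (H₁ × H₂))).fst, (t : H₁)⟫_ℂ +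
        ⟪((s' : WithLp 2 (H₁ × H₂))).snd, T t⟫_ℂ := by
      have := WithLp.prod_inner_apply (𝕜 := ℂ) (s' : WithLp 2 (H₁ × H₂)) (k : WithLp 2 (H₁ × H₂))
      rw [Submodule.coe_inner, this]
      rfl
    have h3 : φ k = ⟪y, (t : H₁)⟫_ℂ := by
      simp [hφ, hk]
    rw [h2, h3] at h1
    have hfst : ((s' : WithLp 2 (H₁ × H₂))).fst = (d : H₁) := hd1.symm
    have hsnd : ((s' : WithLp 2 (H₁ × H₂))).snd = T d := hd2.symm
    rw [hfst, hsnd] at h1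
    exact h1
  have hsub : ∀ t : T.domain, ⟪y - (d : H₁), (t : H₁)⟫_ℂ = ⟪T d, T t⟫_ℂ := by
    intro t
    rw [inner_sub_left]
    linear_combination -hmain t
  have hTs : T d ∈ T.adjoint.domain :=
    T.mem_adjoint_domain_of_exists _ ⟨y - (d : H₁), fun t => hsub t⟩
  exact ⟨d, hTs, LinearPMap.adjoint_apply_eq hdense ⟨T d, hTs⟩ fun t => hsub t⟩

end Aux

open scoped InnerProductSpace ComplexConjugate

/-- Let `T : H₁ → H₂` be a closed densely defined operator and `A = T†∘T`.
If the inclusion `(dom T, graph norm of T) ↪ H₁` is a compact operator, then `A` is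
self-adjoint with discrete spectrum; equivalently the inclusion `(dom A, graph norm of A) ↪ H₁`
is a compact operator (which is how `HasDiscreteSpectrum` is defined here). -/
theorem stmt15 {H₁ H₂ : Type*}
    [NormedAddCommGroup H₁] [InnerProductSpace ℂ H₁] [CompleteSpace H₁]
    [NormedAddCommGroup H₂] [InnerProductSpace ℂ H₂] [CompleteSpace H₂]
    (T : H₁ →ₗ.[ℂ] H₂) (hdense : Dense (T.domain : Set H₁)) (hclosed : T.IsClosed)
    (hcpt : IsCompact (closure ((fun u : T.domain => (u : H₁)) ''
      {u : T.domain | ‖(u : H₁)‖ ^ 2 + ‖T u‖ ^ 2 ≤ 1}))) :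
    (pcomp T.adjoint T).adjoint = pcomp T.adjoint T ∧
      HasDiscreteSpectrum (pcomp T.adjoint T) := by
  classical
  set A := pcomp T.adjoint T with hA
  have hfaT := LinearPMap.adjoint_isFormalAdjoint hdense
  -- surjectivity of `1 + A`, with data
  have hsurj : ∀ y : H₁, ∃ u : A.domain, (u : H₁) + A u = y := by
    intro y
    obtain ⟨s, hTs, heq⟩ := key_surj T hdense hclosed y
    have hmem : (s : H₁) ∈ A.domain := (mem_pcomp_iff _ _).mpr ⟨s.2, hTs⟩
    refine ⟨⟨(s : H₁), hmem⟩, ?_⟩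
    rw [pcomp_apply_s15 T.adjoint T ⟨(s : H₁), hmem⟩ s.2 hTs]
    have : T.adjoint ⟨T ⟨(s : H₁), s.2⟩, hTs⟩ = y - (s : H₁) := heq
    rw [this]
    abel
  -- symmetry of A
  have hsymm : A.IsFormalAdjoint A := by
    intro x z
    obtain ⟨hx1, hx2⟩ := (mem_pcomp_iff T.adjoint T).mp x.2
    obtain ⟨hz1, hz2⟩ := (mem_pcomp_iff T.adjoint T).mp z.2
    rw [show A x = T.adjoint ⟨T ⟨(x : H₁), hx1⟩, hx2⟩ from pcomp_apply_s15 _ _ x hx1 hx2,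
      show A z = T.adjoint ⟨T ⟨(z : H₁), hz1⟩, hz2⟩ from pcomp_apply_s15 _ _ z hz1 hz2]
    calc ⟪T.adjoint ⟨T ⟨(x : H₁), hx1⟩, hx2⟩, (z : H₁)⟫_ℂ
        = ⟪T ⟨(x : H₁), hx1⟩, T ⟨(z : H₁), hz1⟩⟫_ℂ := hfaT ⟨T ⟨(x : H₁), hx1⟩, hx2⟩ ⟨(z : H₁), hz1⟩
      _ = conj ⟪T ⟨(z : H₁), hz1⟩, T ⟨(x : H₁), hx1⟩⟫_ℂ := (inner_conj_symm _ _).symm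
      _ = conj ⟪T.adjoint ⟨T ⟨(z : H₁), hz1⟩, hz2⟩, (x : H₁)⟫_ℂ := by
          rw [hfaT ⟨T ⟨(z : H₁), hz1⟩, hz2⟩ ⟨(x : H₁), hx1⟩]
      _ = ⟪(x : H₁), T.adjoint ⟨T ⟨(z : H₁), hz1⟩, hz2⟩⟫_ℂ := inner_conj_symm _ _
  -- quadratic form identity : ⟪A u, u⟫ = ‖T u‖²
  have hquad : ∀ (u : A.domain) (h1 : (u : H₁) ∈ T.domain),
      ⟪A u, (u : H₁)⟫_ℂ = (‖T ⟨(u : H₁), h1⟩‖ : ℂ) ^ 2 := by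
    intro u h1
    obtain ⟨hx1, hx2⟩ := (mem_pcomp_iff T.adjoint T).mp u.2
    rw [show A u = T.adjoint ⟨T ⟨(u : H₁), hx1⟩, hx2⟩ from pcomp_apply_s15 _ _ u hx1 hx2]
    have := hfaT ⟨T ⟨(u : H₁), hx1⟩, hx2⟩ ⟨(u : H₁), h1⟩
    rw [this]
    exact inner_self_eq_norm_sq_to_K _
  -- density of the domain of A
  have hAdense : Dense (A.domain : Set H₁) := by
    rw [Submodule.dense_iff_topologicalClosure_eq_top, Submodule.topologicalClosure_eq_top_iff]
    rw [Submodule.eq_bot_iff]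
    intro y hy
    obtain ⟨u, hu⟩ := hsurj y
    obtain ⟨hx1, hx2⟩ := (mem_pcomp_iff T.adjoint T).mp u.2
    have h0 : ⟪(u : H₁), y⟫_ℂ = 0 := (Submodule.mem_orthogonal _ _).mp hy (u : H₁) u.2
    have h1 : ⟪(u : H₁), y⟫_ℂ = (‖(u : H₁)‖ : ℂ) ^ 2 + (‖T ⟨(u : H₁), hx1⟩‖ : ℂ) ^ 2 := by
      rw [← hu, inner_add_right, inner_self_eq_norm_sq_to_K]
      congr 1
      have := hquad u hx1
      calc ⟪(u : H₁), A u⟫_ℂ = conj ⟪A u, (u : H₁)⟫_ℂ := (inner_conj_symm _ _).symm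
        _ = conj ((‖T ⟨(u : H₁), hx1⟩‖ : ℂ) ^ 2) := by rw [this]
        _ = (‖T ⟨(u : H₁), hx1⟩‖ : ℂ) ^ 2 := by
            rw [← Complex.ofReal_pow, Complex.conj_ofReal]
    rw [h1] at h0
    have h2 : ‖(u : H₁)‖ ^ 2 + ‖T ⟨(u : H₁), hx1⟩‖ ^ 2 = 0 := by
      exact_mod_cast h0
    have hu0 : ‖(u : H₁)‖ ^ 2 = 0 ∧ ‖T ⟨(u : H₁), hx1⟩‖ ^ 2 = 0 := by
      constructor <;> nlinarith [sq_nonneg ‖(u : H₁)‖, sq_nonneg ‖T ⟨(u : H₁), hx1⟩‖]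
    have hue : (u : H₁) = 0 := by
      have := hu0.1; rwa [pow_eq_zero_iff (two_ne_zero), norm_eq_zero] at this
    have hTu : T ⟨(u : H₁), hx1⟩ = 0 := by
      have := hu0.2; rwa [pow_eq_zero_iff (two_ne_zero), norm_eq_zero] at this
    have hAu : A u = 0 := by
      rw [show A u = T.adjoint ⟨T ⟨(u : H₁), hx1⟩, hx2⟩ from pcomp_apply_s15 _ _ u hx1 hx2]
      have : (⟨T ⟨(u : H₁), hx1⟩, hx2⟩ : T.adjoint.domain) = 0 := Subtype.ext (by simp [hTu])
      rw [this]
      simp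
    rw [← hu, hue, hAu, add_zero]
  have hfaA := LinearPMap.adjoint_isFormalAdjoint hAdense (T := A)
  -- A ≤ A†
  have hle : A ≤ A.adjoint := hsymm.le_adjoint hAdense
  -- for each u in dom A†, u ∈ dom A and values agree
  have hstep : ∀ u : A.adjoint.domain, ∃ hu : (u : H₁) ∈ A.domain,
      A.adjoint u = A ⟨(u : H₁), hu⟩ := by
    intro u
    obtain ⟨w, hw⟩ := hsurj ((u : H₁) + A.adjoint u)
    have horto : ∀ y : H₁, ⟪(u : H₁) - (w : H₁), y⟫_ℂ = 0 := by
      intro y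
      obtain ⟨s, hs⟩ := hsurj y
      rw [inner_sub_left, ← hs]
      have hukey : ⟪(u : H₁), (s : H₁) + A s⟫_ℂ = ⟪(u : H₁) + A.adjoint u, (s : H₁)⟫_ℂ := by
        rw [inner_add_right, inner_add_left, hfaA u s]
      have hwkey : ⟪(w : H₁), (s : H₁) + A s⟫_ℂ = ⟪(w : H₁) + A w, (s : H₁)⟫_ℂ := by
        rw [inner_add_right, inner_add_left, hsymm w s]
      rw [hukey, hwkey, hw]
      ring
    have huw : (u : H₁) = (w : H₁) := by
      have := horto ((u : H₁) - (w : H₁))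
      rw [inner_self_eq_zero] at this
      exact sub_eq_zero.mp this
    have hu : (u : H₁) ∈ A.domain := huw ▸ w.2
    refine ⟨hu, ?_⟩
    have h1 : A ⟨(u : H₁), hu⟩ = A w := congrArg A (Subtype.ext huw)
    have h2 : A.adjoint u = A w := by
      have := hw
      rw [← huw] at this
      exact (add_left_cancel this).symm
    rw [h1, h2]
  have hadjle : A.adjoint ≤ A := by
    refine ⟨fun x hx => ?_, fun x y hxy => ?_⟩
    · obtain ⟨hu, _⟩ := hstep ⟨x, hx⟩
      exact hu
    · obtain ⟨hu, heq⟩ := hstep x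
      rw [heq]
      exact congrArg A (Subtype.ext hxy)
  have hself : A.adjoint = A :=
    LinearPMap.eq_of_le_of_domain_eq hadjle (le_antisymm hadjle.1 hle.1)
  refine ⟨hself, ?_⟩
  -- compactness
  unfold HasDiscreteSpectrum
  set c : ℝ := Real.sqrt (3 / 2) with hc
  have hcpos : 0 < c := Real.sqrt_pos.mpr (by norm_num)
  have hcsq : c ^ 2 = 3 / 2 := Real.sq_sqrt (by norm_num)
  set m : H₁ → H₁ := fun x => ((c : ℂ)) • x with hm
  have hKc : IsCompact (m '' closure ((fun u : T.domain => (u : H₁)) ''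
      {u : T.domain | ‖(u : H₁)‖ ^ 2 + ‖T u‖ ^ 2 ≤ 1})) :=
    hcpt.image (continuous_const_smul _)
  refine IsCompact.of_isClosed_subset hKc isClosed_closure ?_
  refine closure_minimal ?_ hKc.isClosed
  rintro _ ⟨u, hu, rfl⟩
  simp only [Set.mem_setOf_eq] at hu
  obtain ⟨hx1, hx2⟩ := (mem_pcomp_iff T.adjoint T).mp u.2
  -- bound on ‖T u‖²
  have hTb : ‖T ⟨(u : H₁), hx1⟩‖ ^ 2 ≤ ‖A u‖ * ‖(u : H₁)‖ := by
    have h1 := hquad u hx1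
    have h2 : ‖⟪A u, (u : H₁)⟫_ℂ‖ ≤ ‖A u‖ * ‖(u : H₁)‖ := norm_inner_le_norm _ _
    rw [h1] at h2
    calc ‖T ⟨(u : H₁), hx1⟩‖ ^ 2 = ‖((‖T ⟨(u : H₁), hx1⟩‖ : ℂ)) ^ 2‖ := by
          rw [norm_pow, Complex.norm_real, Real.norm_eq_abs, abs_norm]
      _ ≤ ‖A u‖ * ‖(u : H₁)‖ := h2
  have hgb : ‖(u : H₁)‖ ^ 2 + ‖T ⟨(u : H₁), hx1⟩‖ ^ 2 ≤ 3 / 2 := by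
    nlinarith [hu, sq_nonneg (‖A u‖ - ‖(u : H₁)‖), sq_nonneg ‖A u‖, sq_nonneg ‖(u : H₁)‖]
  -- the rescaled element
  set v : T.domain := ((c : ℂ))⁻¹ • (⟨(u : H₁), hx1⟩ : T.domain) with hv
  have hvnorm : ‖(v : H₁)‖ ^ 2 + ‖T v‖ ^ 2 ≤ 1 := by
    have hcoe : (v : H₁) = ((c : ℂ))⁻¹ • (u : H₁) := rfl
    have hTv : T v = ((c : ℂ))⁻¹ • T ⟨(u : H₁), hx1⟩ :=
      LinearMap.map_smul T.toFun _ _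
    have hnc : ‖((c : ℂ))⁻¹‖ = c⁻¹ := by
      rw [norm_inv, Complex.norm_real, Real.norm_eq_abs, abs_of_pos hcpos]
    rw [hcoe, hTv, norm_smul, norm_smul, hnc]
    have : (c⁻¹ * ‖(u : H₁)‖) ^ 2 + (c⁻¹ * ‖T ⟨(u : H₁), hx1⟩‖) ^ 2 =
        (c ^ 2)⁻¹ * (‖(u : H₁)‖ ^ 2 + ‖T ⟨(u : H₁), hx1⟩‖ ^ 2) := by ring
    rw [this, hcsq]
    nlinarith [hgb]
  refine ⟨(v : H₁), subset_closure ⟨v, hvnorm, rfl⟩, ?_⟩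
  show ((c : ℂ)) • ((v : H₁)) = (u : H₁)
  have hcoe : (v : H₁) = ((c : ℂ))⁻¹ • (u : H₁) := rfl
  rw [hcoe, smul_inv_smul₀]
  simpa using hcpos.ne'
end Paper
end
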